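/- Identify linear functionals on ℝ[t]_d with vectors v = (v_0, …, v_d) ∈ ℝ^{d+1} via v_i = v(t^i). For d > 2k ≥ 2, the dual cone of SOCF_{2k+1,d} = Σ_{i=0}^{d−2k} t^i Σ_{2k} equals the set of v ∈ ℝ^{d+1} such that the (k+1)×(k+1) Hankel matrices M_{s,k}(v) = (v_{s+i+j})_{i,j=0,…,k} are positive semidefinite for all s = 0, 1, …, d − 2k. -/

import Mathlib

open Polynomial

/-- The cone `SOCF_{2k+1,d}` of finite sums of copositive `(2k+1)`-nomials of degree
at most `d`. -/
def SOCF (k d : ℕ) : Set (Polynomial ℝ) :=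
  {f : ℝ[X] | ∃ (l : ℕ) (g : Fin l → ℝ[X]),
    (∀ i, (g i).support.card ≤ 2 * k + 1 ∧ (g i).natDegree ≤ d ∧
      ∀ x : ℝ, 0 ≤ x → 0 ≤ (g i).eval x) ∧
    f = ∑ i, g i}

namespace Stmt15

noncomputable def Vaux : ℝ → List ℝ → ℕ
  | _, [] => 0
  | a, b :: l => if b = 0 then Vaux a l else (if a * b < 0 then 1 else 0) + Vaux b l

@[simp] lemma Vaux_nil (a : ℝ) : Vaux a [] = 0 := rfl
lemma Vaux_cons (a b : ℝ) (l : List ℝ) :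
    Vaux a (b :: l) = if b = 0 then Vaux a l else (if a * b < 0 then 1 else 0) + Vaux b l := rfl
@[simp] lemma Vaux_cons_zero (a : ℝ) (l : List ℝ) : Vaux a (0 :: l) = Vaux a l := by
  simp [Vaux_cons]
lemma Vaux_cons_ne (a : ℝ) {b : ℝ} (hb : b ≠ 0) (l : List ℝ) :
    Vaux a (b :: l) = (if a * b < 0 then 1 else 0) + Vaux b l := by
  simp [Vaux_cons, hb]
lemma mul_lt_zero_iff_of_pos_mul {s s' b : ℝ} (h : 0 < s * s') :
    (s * b < 0 ↔ s' * b < 0) := by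
  rcases lt_trichotomy s 0 with hs | hs | hs
  · have hs' : s' < 0 := by nlinarith
    constructor <;> intro <;> nlinarith
  · exfalso; rw [hs, zero_mul] at h; exact lt_irrefl _ h
  · have hs' : 0 < s' := by nlinarith
    constructor <;> intro <;> nlinarith

lemma Vaux_congr_sign {s s' : ℝ} (h : 0 < s * s') (l : List ℝ) : Vaux s l = Vaux s' l := by
  induction l with
  | nil => rfl
  | cons b l ih =>
    rcases eq_or_ne b 0 with hb | hb
    · simp [hb, ih]
    · rw [Vaux_cons_ne _ hb, Vaux_cons_ne _ hb, if_congr (mul_lt_zero_iff_of_pos_mul h) rfl rfl]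

lemma Vaux_zero_le (s : ℝ) (l : List ℝ) : Vaux 0 l ≤ Vaux s l := by
  induction l generalizing s with
  | nil => exact le_rfl
  | cons b l ih =>
    rcases eq_or_ne b 0 with hb | hb
    · simpa [hb] using ih s
    · rw [Vaux_cons_ne _ hb, Vaux_cons_ne _ hb]
      simp only [zero_mul, if_neg (lt_irrefl (0:ℝ))]
      split <;> omega

/-- coefficient list of `(X - β) * p` (little-endian), given context coefficient `x`. -/
noncomputable def auxb (β : ℝ) : ℝ → List ℝ → List ℝ
  | x, [] => [x]
  | x, y :: l => (x - β * y) :: auxb β y l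

lemma auxb_nil (β x : ℝ) : auxb β x [] = [x] := rfl
lemma auxb_cons (β x y : ℝ) (l : List ℝ) : auxb β x (y :: l) = (x - β * y) :: auxb β y l := rfl

lemma head_neg {β y : ℝ} (hβ : 0 < β) (hy : y ≠ 0) : (0 - β * y) * y < 0 := by
  nlinarith [mul_pos hβ (mul_self_pos.mpr hy)]

lemma head_neg_ne {β y : ℝ} (hβ : 0 < β) (hy : y ≠ 0) : 0 - β * y ≠ 0 := by
  intro h
  have := head_neg hβ hy
  rw [h, zero_mul] at this
  exact lt_irrefl _ this

lemma triple {β : ℝ} (hβ : 0 < β) :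
    ∀ l : List ℝ,
      (∀ x s : ℝ, s * x < 0 → Vaux x l + 1 ≤ Vaux s (auxb β x l)) ∧
      (∀ x : ℝ, Vaux x l ≤ Vaux x (auxb β 0 l)) ∧
      (∀ x s : ℝ, Vaux x l ≤ Vaux s (auxb β x l)) := by
  intro l
  induction l with
  | nil =>
    refine ⟨fun x s hsx => ?_, fun x => ?_, fun x s => ?_⟩
    · have hx : x ≠ 0 := fun h => by simp [h] at hsx
      rw [auxb_nil, Vaux_cons_ne _ hx, if_pos hsx]; simp
    · rw [Vaux_nil]; exact Nat.zero_le _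
    · rw [Vaux_nil]; exact Nat.zero_le _
  | cons y l ih =>
    obtain ⟨G2, H, M⟩ := ih
    refine ⟨fun x s hsx => ?_, fun x => ?_, fun x s => ?_⟩
    · -- G2
      have hx : x ≠ 0 := fun h => by simp [h] at hsx
      have hs : s ≠ 0 := fun h => by simp [h] at hsx
      rw [auxb_cons]
      rcases eq_or_ne y 0 with hy | hy
      · subst hy
        have hd : x - β * 0 = x := by ring_nf
        rw [hd, Vaux_cons_ne _ hx, if_pos hsx, Vaux_cons_zero]
        have := H x
        omega
      · rw [Vaux_cons_ne _ hy]
        rcases lt_trichotomy (x * y) 0 with hxy | hxy | hxy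
        · -- x, y opposite signs
          have hδx : 0 < x * (x - β * y) := by
            nlinarith [mul_self_pos.mpr hx, mul_neg_of_pos_of_neg hβ hxy]
          have hδ : x - β * y ≠ 0 := by
            intro h; rw [h, mul_zero] at hδx; exact lt_irrefl _ hδx
          have hδy : (x - β * y) * y < 0 := by
            nlinarith [mul_pos hβ (mul_self_pos.mpr hy)]
          have hsδ : s * (x - β * y) < 0 := by
            have hsy : 0 < s * y := by
              nlinarith [mul_pos_of_neg_of_neg hsx hxy, mul_self_pos.mpr hx]
            nlinarith [mul_pos hβ hsy]
          rw [Vaux_cons_ne _ hδ, if_pos hsδ, if_pos hxy]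
          have := G2 y (x - β * y) hδy
          omega
        · exact absurd hxy (mul_ne_zero hx hy)
        · -- same signs
          rw [if_neg (by linarith)]
          have hsy : s * y < 0 := by
            nlinarith [mul_neg_of_neg_of_pos hsx hxy, mul_self_pos.mpr hx]
          rcases eq_or_ne (x - β * y) 0 with hδ | hδ
          · rw [hδ, Vaux_cons_zero]
            have := G2 y s hsy
            omega
          · rw [Vaux_cons_ne _ hδ]
            rcases lt_trichotomy ((x - β * y) * y) 0 with hδy | hδy | hδy
            · have := G2 y (x - β * y) hδy
              split <;> omega
            · exact absurd hδy (mul_ne_zero hδ hy)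
            · have hsδ : s * (x - β * y) < 0 := by
                nlinarith [mul_neg_of_neg_of_pos hsy hδy, mul_self_pos.mpr hy]
              rw [if_pos hsδ]
              have := M y (x - β * y)
              omega
    · -- H
      rw [auxb_cons]
      rcases eq_or_ne y 0 with hy | hy
      · subst hy
        have hd : (0:ℝ) - β * 0 = 0 := by ring_nf
        rw [hd, Vaux_cons_zero, Vaux_cons_zero]
        exact H x
      · rw [Vaux_cons_ne _ hy, Vaux_cons_ne _ (head_neg_ne hβ hy)]
        have := G2 y (0 - β * y) (head_neg hβ hy)
        split <;> split <;> omega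
    · -- M
      rw [auxb_cons]
      rcases eq_or_ne y 0 with hy | hy
      · subst hy
        have hd : x - β * 0 = x := by ring_nf
        rw [hd, Vaux_cons_zero]
        rcases eq_or_ne x 0 with hx | hx
        · subst hx
          rw [Vaux_cons_zero]
          calc Vaux 0 l ≤ Vaux s l := Vaux_zero_le s l
            _ ≤ Vaux s (auxb β 0 l) := H s
        · rw [Vaux_cons_ne _ hx]
          have := H x
          split <;> omega
      · rw [Vaux_cons_ne _ hy]
        rcases lt_or_ge (x * y) 0 with hxy | hxy
        · have hx : x ≠ 0 := by
            rintro rfl; rw [zero_mul] at hxy; exact lt_irrefl _ hxy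
          have hδx : 0 < x * (x - β * y) := by
            nlinarith [mul_self_pos.mpr hx, mul_neg_of_pos_of_neg hβ hxy]
          have hδ : x - β * y ≠ 0 := by
            intro h; rw [h, mul_zero] at hδx; exact lt_irrefl _ hδx
          have hδy : (x - β * y) * y < 0 := by
            nlinarith [mul_pos hβ (mul_self_pos.mpr hy)]
          rw [Vaux_cons_ne _ hδ, if_pos hxy]
          have := G2 y (x - β * y) hδy
          split <;> omega
        · rw [if_neg (by linarith)]
          rcases eq_or_ne (x - β * y) 0 with hδ | hδ
          · rw [hδ, Vaux_cons_zero]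
            have := M y s
            omega
          · rw [Vaux_cons_ne _ hδ]
            have := M y (x - β * y)
            split <;> omega

/-- Key Descartes-type lemma at the list level. -/
lemma V_auxb_zero {β : ℝ} (hβ : 0 < β) :
    ∀ l : List ℝ, (∃ a ∈ l, a ≠ 0) → Vaux 0 l + 1 ≤ Vaux 0 (auxb β 0 l) := by
  intro l
  induction l with
  | nil => rintro ⟨a, ha, -⟩; exact absurd ha List.not_mem_nil
  | cons y l ih =>
    rintro ⟨a, ha, hane⟩
    rw [auxb_cons]
    rcases eq_or_ne y 0 with hy | hy
    · subst hy
      have hd : (0:ℝ) - β * 0 = 0 := by ring_nf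
      rw [hd, Vaux_cons_zero, Vaux_cons_zero]
      refine ih ⟨a, ?_, hane⟩
      rcases List.mem_cons.1 ha with h | h
      · exact absurd h hane
      · exact h
    · rw [Vaux_cons_ne _ hy, Vaux_cons_ne _ (head_neg_ne hβ hy)]
      have := (triple hβ l).1 y (0 - β * y) (head_neg hβ hy)
      simp only [zero_mul, if_neg (lt_irrefl (0:ℝ))]
      omega

lemma Vaux_le_countP : ∀ (l : List ℝ) (s : ℝ), s ≠ 0 →
    Vaux s l ≤ l.countP (fun x => decide (x ≠ 0)) := by
  intro l
  induction l with
  | nil => intro s _; simp [Vaux_nil]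
  | cons b l ih =>
    intro s hs
    rcases eq_or_ne b 0 with hb | hb
    · simp only [hb, Vaux_cons_zero, List.countP_cons]
      have := ih s hs
      simp only [decide_eq_true_eq]
      split <;> omega
    · rw [Vaux_cons_ne _ hb]
      have := ih b hb
      simp only [List.countP_cons, decide_eq_true_eq, if_pos hb]
      split <;> omega

lemma Vaux_zero_lt_countP : ∀ l : List ℝ,
    Vaux 0 l = 0 ∨ Vaux 0 l < l.countP (fun x => decide (x ≠ 0)) := by
  intro l
  induction l with
  | nil => left; rfl
  | cons b l ih =>
    rcases eq_or_ne b 0 with hb | hb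
    · subst hb
      rw [Vaux_cons_zero]
      rcases ih with h | h
      · left; exact h
      · right
        simp only [List.countP_cons, decide_eq_true_eq]
        split <;> omega
    · right
      rw [Vaux_cons_ne _ hb]
      simp only [zero_mul, if_neg (lt_irrefl (0:ℝ)), List.countP_cons, decide_eq_true_eq,
        if_pos hb]
      have := Vaux_le_countP l b hb
      omega

lemma Vaux_nonneg_of_eq_zero : ∀ (l : List ℝ) (s : ℝ), 0 < s → Vaux s l = 0 →
    ∀ x ∈ l, 0 ≤ x := by
  intro l
  induction l with
  | nil => intro s _ _ x hx; exact absurd hx List.not_mem_nil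
  | cons b l ih =>
    intro s hs hV x hx
    rcases eq_or_ne b 0 with hb | hb
    · subst hb
      rw [Vaux_cons_zero] at hV
      rcases List.mem_cons.1 hx with h | h
      · exact h ▸ le_rfl
      · exact ih s hs hV x h
    · rw [Vaux_cons_ne _ hb] at hV
      have h1 : ¬ s * b < 0 := by
        intro h; rw [if_pos h] at hV; omega
      have hbpos : 0 < b := by
        rcases lt_trichotomy b 0 with h | h | h
        · exact absurd (mul_neg_of_pos_of_neg hs h) h1
        · exact absurd h hb
        · exact h
      rw [if_neg h1, zero_add] at hV
      rcases List.mem_cons.1 hx with h | h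
      · exact h ▸ hbpos.le
      · exact ih b hbpos hV x h

lemma Vaux_append_zero (s : ℝ) : ∀ l : List ℝ, Vaux s (l ++ [0]) = Vaux s l := by
  intro l
  induction l generalizing s with
  | nil => simp
  | cons b l ih =>
    rcases eq_or_ne b 0 with hb | hb
    · simp [hb, ih]
    · rw [List.cons_append, Vaux_cons_ne _ hb, Vaux_cons_ne _ hb, ih]

/-! ### Polynomial bridge -/

def toL (p : ℝ[X]) (m : ℕ) : List ℝ := (List.range m).map p.coeff

noncomputable def Vp (p : ℝ[X]) : ℕ := Vaux 0 (toL p (p.natDegree + 1))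

lemma toL_succ (p : ℝ[X]) (m : ℕ) : toL p (m + 1) = toL p m ++ [p.coeff m] := by
  simp [toL, List.range_succ]

lemma toL_cons (p : ℝ[X]) (m : ℕ) : toL p (m + 1) = p.coeff 0 :: toL p.divX m := by
  rw [toL, List.range_succ_eq_map]
  simp only [List.map_cons, List.map_map]
  congr 1
  · rw [toL]
    apply List.map_congr_left
    intro i _
    simp [Function.comp, coeff_divX]

lemma Vaux_toL_of_le (p : ℝ[X]) (s : ℝ) :
    ∀ m, p.natDegree + 1 ≤ m → Vaux s (toL p m) = Vaux s (toL p (p.natDegree + 1)) := by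
  intro m
  induction m with
  | zero => omega
  | succ m ih =>
    intro hm
    rcases eq_or_lt_of_le hm with h | h
    · rw [h]
    · have hm' : p.natDegree + 1 ≤ m := by omega
      have hc : p.coeff m = 0 := coeff_eq_zero_of_natDegree_lt (by omega)
      rw [toL_succ, hc, Vaux_append_zero, ih hm']

lemma Vp_eq_toL (p : ℝ[X]) (m : ℕ) (hm : p.natDegree + 1 ≤ m) :
    Vaux 0 (toL p m) = Vp p := Vaux_toL_of_le p 0 m hm

lemma divX_lin_add {β x : ℝ} (p : ℝ[X]) :
    ((X - C β) * p + C x).divX = (X - C β) * p.divX + C (p.coeff 0) := by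
  ext n
  cases n with
  | zero =>
    simp only [coeff_divX, sub_mul, coeff_sub, coeff_add, coeff_C, mul_coeff_zero, coeff_X_mul,
      coeff_C_mul, coeff_X_zero, coeff_ofNat_zero]
    ring_nf
    simp [coeff_C]
    try ring
  | succ n =>
    simp [coeff_divX, sub_mul, coeff_sub, coeff_add, coeff_C, coeff_X_mul, coeff_C_mul]

lemma auxb_toL {β : ℝ} :
    ∀ (m : ℕ) (p : ℝ[X]) (x : ℝ), (∀ i, m ≤ i → p.coeff i = 0) →
      auxb β x (toL p m) = toL ((X - C β) * p + C x) (m + 1) := by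
  intro m
  induction m with
  | zero =>
    intro p x h
    have hp : p = 0 := by
      ext i; exact h i (Nat.zero_le i)
    subst hp
    simp [toL, auxb_nil, List.range_succ]
  | succ m ih =>
    intro p x h
    rw [toL_cons, auxb_cons, ih p.divX (p.coeff 0)
      (fun i hi => by rw [coeff_divX]; exact h (i+1) (by omega)),
      toL_cons ((X - C β) * p + C x) (m+1), divX_lin_add p]
    refine List.cons_eq_cons.mpr ⟨?_, rfl⟩
    simp only [coeff_add, coeff_C, sub_mul, coeff_sub, mul_coeff_zero, coeff_C_mul, coeff_X_zero,
      if_pos rfl]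
    norm_num
    ring

lemma natDegree_lin_mul {β : ℝ} {p : ℝ[X]} (hp : p ≠ 0) :
    ((X - C β) * p).natDegree = p.natDegree + 1 := by
  rw [natDegree_mul (X_sub_C_ne_zero β) hp, natDegree_X_sub_C]
  omega

/-- Descartes-type lemma at the polynomial level. -/
lemma Vp_lin_mul {β : ℝ} (hβ : 0 < β) {p : ℝ[X]} (hp : p ≠ 0) :
    Vp p + 1 ≤ Vp ((X - C β) * p) := by
  have hd : ((X - C β) * p).natDegree = p.natDegree + 1 := natDegree_lin_mul hp
  have hb : auxb β 0 (toL p (p.natDegree + 1)) = toL ((X - C β) * p) (p.natDegree + 2) := by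
    have := auxb_toL (β := β) (p.natDegree + 1) p 0
      (fun i hi => coeff_eq_zero_of_natDegree_lt (by omega))
    rwa [map_zero, add_zero] at this
  have hmem : ∃ a ∈ toL p (p.natDegree + 1), a ≠ 0 := by
    refine ⟨p.coeff p.natDegree, ?_, ?_⟩
    · exact List.mem_map.2 ⟨p.natDegree, List.mem_range.2 (by omega), rfl⟩
    · exact mt leadingCoeff_eq_zero.mp hp
  have key := V_auxb_zero hβ (toL p (p.natDegree + 1)) hmem
  rw [hb] at key
  unfold Vp
  rw [hd]
  exact key

lemma divX_X_mul (p : ℝ[X]) : (X * p).divX = p := by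
  ext n
  rw [coeff_divX, coeff_X_mul]

lemma Vp_X_mul {p : ℝ[X]} (hp : p ≠ 0) : Vp (X * p) = Vp p := by
  have hd : (X * p).natDegree = p.natDegree + 1 := by
    rw [natDegree_mul X_ne_zero hp, natDegree_X]
    omega
  unfold Vp
  rw [hd, toL_cons, divX_X_mul]
  have h0 : (X * p).coeff 0 = 0 := by
    rw [mul_coeff_zero, coeff_X_zero, zero_mul]
  rw [h0, Vaux_cons_zero]

lemma divX_sub_C (f : ℝ[X]) (c : ℝ) : (f - C c).divX = f.divX := by
  ext n
  simp [coeff_divX, coeff_sub, coeff_C]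

lemma Vp_sub_C {f : ℝ[X]} {c : ℝ} (h0 : 0 < f.coeff 0) (hc : 0 ≤ f.coeff 0 - c) :
    Vp (f - C c) ≤ Vp f := by
  unfold Vp
  rw [natDegree_sub_C, toL_cons, toL_cons, divX_sub_C, coeff_sub, coeff_C, if_pos rfl]
  rw [Vaux_cons_ne _ (ne_of_gt h0), zero_mul, if_neg (lt_irrefl 0), zero_add]
  rcases eq_or_lt_of_le hc with h | h
  · rw [← h, Vaux_cons_zero]
    exact Vaux_zero_le _ _
  · rw [Vaux_cons_ne _ (ne_of_gt h), zero_mul, if_neg (lt_irrefl 0), zero_add]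
    rw [Vaux_congr_sign (mul_pos h h0)]

lemma coeff_nonneg_of_Vp_eq_zero {f : ℝ[X]} (h0 : 0 < f.coeff 0) (hV : Vp f = 0) :
    ∀ i, 0 ≤ f.coeff i := by
  have key : ∀ x ∈ toL f (f.natDegree + 1), 0 ≤ x := by
    unfold Vp at hV
    rw [toL_cons, Vaux_cons_ne _ (ne_of_gt h0), zero_mul, if_neg (lt_irrefl 0), zero_add] at hV
    intro x hx
    rw [toL_cons] at hx
    rcases List.mem_cons.1 hx with h | h
    · exact h ▸ h0.le
    · exact Vaux_nonneg_of_eq_zero _ _ h0 hV x h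
  intro i
  rcases le_or_gt i f.natDegree with hi | hi
  · exact key _ (List.mem_map.2 ⟨i, List.mem_range.2 (by omega), rfl⟩)
  · rw [coeff_eq_zero_of_natDegree_lt hi]

lemma Vp_le_of_card {f : ℝ[X]} {n : ℕ} (h : f.support.card ≤ n + 1) : Vp f ≤ n := by
  rcases Vaux_zero_lt_countP (toL f (f.natDegree + 1)) with h' | h'
  · unfold Vp; omega
  · have hc : (toL f (f.natDegree + 1)).countP (fun x => decide (x ≠ 0)) ≤ f.support.card := by
      rw [toL, List.countP_map]
      set L := (List.range (f.natDegree + 1)).filter (fun i => decide (f.coeff i ≠ 0)) with hL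
      have hnd : L.Nodup := List.nodup_range.filter _
      have hsub : L.toFinset ⊆ f.support := by
        intro i hi
        rw [List.mem_toFinset, hL, List.mem_filter] at hi
        rw [mem_support_iff]
        simpa using hi.2
      calc ((List.range (f.natDegree + 1)).countP ((fun x => decide (x ≠ 0)) ∘ f.coeff))
          = L.length := by
            rw [List.countP_eq_length_filter]
            rfl
        _ = L.toFinset.card := (List.toFinset_card_of_nodup hnd).symm
        _ ≤ f.support.card := Finset.card_le_card hsub
    unfold Vp
    omega

/-! ### The cone of shifted sums of squares -/

inductive Rep (d m : ℕ) : ℝ[X] → Prop where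
  | zero : Rep d m 0
  | add (c : ℕ) (q f : ℝ[X]) : c + 2 * q.natDegree ≤ d → 2 * q.natDegree ≤ m →
      Rep d m f → Rep d m (X ^ c * q ^ 2 + f)

lemma Rep.mono {d m d' m' : ℕ} {f : ℝ[X]} (hd : d ≤ d') (hm : m ≤ m') (h : Rep d m f) :
    Rep d' m' f := by
  induction h with
  | zero => exact Rep.zero
  | add c q g hc hq _ ih => exact Rep.add c q g (by omega) (by omega) ih

lemma Rep.addRep {d m : ℕ} {f g : ℝ[X]} (hf : Rep d m f) (hg : Rep d m g) :
    Rep d m (f + g) := by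
  induction hf with
  | zero => rwa [zero_add]
  | add c q f' hc hq _ ih =>
    rw [add_assoc]
    exact Rep.add c q (f' + g) hc hq ih

lemma Rep.X_mul {d m : ℕ} {f : ℝ[X]} (hf : Rep d m f) : Rep (d + 1) m (X * f) := by
  induction hf with
  | zero => rw [mul_zero]; exact Rep.zero
  | add c q f' hc hq _ ih =>
    have : X * (X ^ c * q ^ 2 + f') = X ^ (c + 1) * q ^ 2 + X * f' := by ring
    rw [this]
    exact Rep.add (c+1) q (X * f') (by omega) hq ih

lemma Rep.sq_mul {d m : ℕ} {f : ℝ[X]} (r : ℝ[X]) (hf : Rep d m f) :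
    Rep (d + 2 * r.natDegree) (m + 2 * r.natDegree) (r ^ 2 * f) := by
  induction hf with
  | zero => rw [mul_zero]; exact Rep.zero
  | add c q f' hc hq _ ih =>
    have : r ^ 2 * (X ^ c * q ^ 2 + f') = X ^ c * (r * q) ^ 2 + r ^ 2 * f' := by ring
    rw [this]
    refine Rep.add c (r * q) (r ^ 2 * f') ?_ ?_ ih <;>
      have := natDegree_mul_le (p := r) (q := q) <;> omega

lemma Rep.const {d m : ℕ} {a : ℝ} (ha : 0 ≤ a) : Rep d m (C a) := by
  have : C a = X ^ 0 * (C (Real.sqrt a)) ^ 2 + 0 := by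
    rw [pow_zero, one_mul, add_zero, ← C_pow, Real.sq_sqrt ha]
  rw [this]
  exact Rep.add 0 _ 0 (by simp) (by simp) Rep.zero

lemma Rep.monomial {d m : ℕ} {a : ℝ} {c : ℕ} (ha : 0 ≤ a) (hc : c ≤ d) :
    Rep d m (C a * X ^ c) := by
  have : C a * X ^ c = X ^ c * (C (Real.sqrt a)) ^ 2 + 0 := by
    rw [← C_pow, Real.sq_sqrt ha]; ring
  rw [this]
  exact Rep.add c _ 0 (by simp [natDegree_C]; omega) (by simp) Rep.zero

open Filter Topology in
/-- A polynomial nonnegative on `[0, ∞)` divided by `X` (when it has constant term zero)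
or by `(X-β)²` remains nonnegative on `[0,∞)`; nonnegativity at the boundary point comes
from continuity.  Here: if `x * g(x) ≥ 0` type facts hold off a point, extend by limits. -/
lemma eval_nonneg_of_nonneg_off {g : ℝ[X]} {β : ℝ} (hβ : 0 ≤ β)
    (h : ∀ x : ℝ, β < x → 0 ≤ g.eval x) : 0 ≤ g.eval β := by
  have ht : Filter.Tendsto (fun x => g.eval x) (nhdsWithin β (Set.Ioi β)) (nhds (g.eval β)) :=
    (g.continuous.tendsto β).mono_left nhdsWithin_le_nhds
  refine ge_of_tendsto ht ?_
  filter_upwards [self_mem_nhdsWithin] with x hx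
  exact h x hx

open scoped Classical in
noncomputable def mu (f : ℝ[X]) : ℕ :=
  2 * f.natDegree + (if ∃ x : ℝ, 0 ≤ x ∧ f.eval x = 0 then 0 else 1)

lemma mu_le (f : ℝ[X]) : mu f ≤ 2 * f.natDegree + 1 := by
  rw [mu]; split <;> omega

lemma Vp_of_natDegree_zero {f : ℝ[X]} (h : f.natDegree = 0) : Vp f = 0 := by
  rw [Vp, h]
  have h1 : toL f 1 = [f.coeff 0] := by
    simp [toL, List.range_succ]
  rw [h1, Vaux_cons]
  split <;> simp

open Filter Topology in
theorem main_structure : ∀ (n : ℕ) (f : ℝ[X]), mu f ≤ n → (∀ x : ℝ, 0 ≤ x → 0 ≤ f.eval x) →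
    Rep f.natDegree (Vp f) f := by
  intro n
  induction n using Nat.strong_induction_on with
  | _ n IH =>
  intro f hn hpos
  rcases eq_or_ne f 0 with rfl | hf0
  · exact Rep.zero
  by_cases hroot : ∃ x : ℝ, 0 ≤ x ∧ f.eval x = 0
  · have hμf : mu f = 2 * f.natDegree := by rw [mu, if_pos hroot, add_zero]
    by_cases h0 : f.eval 0 = 0
    · -- factor out X
      have hc0 : f.coeff 0 = 0 := by rwa [coeff_zero_eq_eval_zero]
      have hf : X * f.divX = f := by
        have h1 := divX_mul_X_add f
        rwa [hc0, map_zero, add_zero, mul_comm] at h1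
      have hg : f.divX ≠ 0 := fun h => hf0 (by rw [← hf, h, mul_zero])
      have hdeg : f.natDegree = f.divX.natDegree + 1 := by
        have h1 := natDegree_mul (p := (X:ℝ[X])) (q := f.divX) X_ne_zero hg
        rw [hf, natDegree_X] at h1
        omega
      have hgpos : ∀ x : ℝ, 0 ≤ x → 0 ≤ f.divX.eval x := by
        have hoff : ∀ x : ℝ, 0 < x → 0 ≤ f.divX.eval x := by
          intro x hx
          have h1 : 0 ≤ x * f.divX.eval x := by
            have := hpos x hx.le
            rwa [← hf, eval_mul, eval_X] at this
          nlinarith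
        intro x hx
        rcases eq_or_lt_of_le hx with h | h
        · rw [← h]
          exact eval_nonneg_of_nonneg_off le_rfl hoff
        · exact hoff x h
      have hmug : mu f.divX < n := by
        have := mu_le f.divX
        omega
      have hrec := (IH _ hmug f.divX le_rfl hgpos).X_mul
      rw [hf] at hrec
      have hVp : Vp f = Vp f.divX := by rw [← Vp_X_mul hg, hf]
      rw [hVp, hdeg]
      exact hrec
    · -- positive root β
      obtain ⟨β, hβ0, hβroot⟩ := hroot
      have hβ : 0 < β := lt_of_le_of_ne hβ0 (fun h => h0 (h ▸ hβroot))
      -- local min at β, so derivative vanishes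
      have hlm : IsLocalMin (fun x => f.eval x) β := by
        have hev : ∀ᶠ x in 𝓝 β, x ∈ Set.Ioi (0:ℝ) := isOpen_Ioi.eventually_mem hβ
        filter_upwards [hev] with x hx
        rw [hβroot]
        exact hpos x (le_of_lt hx)
      have hderiv : f.derivative.eval β = 0 := by
        have := hlm.deriv_eq_zero
        rwa [Polynomial.deriv] at this
      obtain ⟨g1, hg1⟩ : (X - C β) ∣ f := dvd_iff_isRoot.mpr hβroot
      have hg1root : g1.eval β = 0 := by
        have hd : f.derivative = g1 + (X - C β) * g1.derivative := by
          rw [hg1, derivative_mul]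
          simp [derivative_X, derivative_C]
        have := hderiv
        rw [hd, eval_add, eval_mul, eval_sub, eval_X, eval_C, sub_self, zero_mul,
          add_zero] at this
        exact this
      obtain ⟨h, hh⟩ : (X - C β) ∣ g1 := dvd_iff_isRoot.mpr hg1root
      have hfh : f = (X - C β) ^ 2 * h := by rw [hg1, hh]; ring
      have hhne : h ≠ 0 := fun hz => hf0 (by rw [hfh, hz, mul_zero])
      have hhpos : ∀ x : ℝ, 0 ≤ x → 0 ≤ h.eval x := by
        have hoff : ∀ x : ℝ, β < x → 0 ≤ h.eval x := by
          intro x hx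
          have h1 : 0 ≤ (x - β) ^ 2 * h.eval x := by
            have := hpos x (by linarith)
            rwa [hfh, eval_mul, eval_pow, eval_sub, eval_X, eval_C] at this
          have hsq : 0 < (x - β) ^ 2 := by
            have hne : x - β ≠ 0 := sub_ne_zero.mpr (ne_of_gt hx)
            positivity
          nlinarith
        intro x hx
        rcases lt_trichotomy x β with h1 | h1 | h1
        · have h2 : 0 ≤ (x - β) ^ 2 * h.eval x := by
            have := hpos x hx
            rwa [hfh, eval_mul, eval_pow, eval_sub, eval_X, eval_C] at this
          have hsq : 0 < (x - β) ^ 2 := by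
            have hne : x - β ≠ 0 := sub_ne_zero.mpr (ne_of_lt h1)
            positivity
          nlinarith
        · rw [h1]; exact eval_nonneg_of_nonneg_off hβ0 hoff
        · exact hoff x h1
      have hdegf : f.natDegree = h.natDegree + 2 := by
        rw [hfh, natDegree_mul (pow_ne_zero 2 (X_sub_C_ne_zero β)) hhne, natDegree_pow,
          natDegree_X_sub_C]
        omega
      have hmuh : mu h < n := by
        have := mu_le h
        omega
      have hrec := (IH _ hmuh h le_rfl hhpos).sq_mul (X - C β)
      rw [natDegree_X_sub_C] at hrec
      have hVp : Vp h + 2 ≤ Vp f := by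
        have hne1 : (X - C β) * h ≠ 0 := mul_ne_zero (X_sub_C_ne_zero β) hhne
        have k1 := Vp_lin_mul hβ hhne
        have k2 := Vp_lin_mul hβ hne1
        have hrw : (X - C β) * ((X - C β) * h) = (X - C β) ^ 2 * h := by ring
        rw [hrw, ← hfh] at k2
        omega
      rw [← hfh] at hrec
      exact hrec.mono (by omega) (by omega)
  · -- no root on [0,∞): f is strictly positive there
    have hfpos : ∀ x : ℝ, 0 ≤ x → 0 < f.eval x := fun x hx =>
      (hpos x hx).lt_of_ne (fun h => hroot ⟨x, hx, h.symm⟩)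
    by_cases hV : Vp f = 0
    · -- all coefficients nonnegative
      have h00 : 0 < f.coeff 0 := by
        rw [coeff_zero_eq_eval_zero]
        exact hfpos 0 le_rfl
      have hco := coeff_nonneg_of_Vp_eq_zero h00 hV
      rw [hV]
      have hrep : Rep f.natDegree 0
          (∑ i ∈ Finset.range (f.natDegree + 1), C (f.coeff i) * X ^ i) := by
        refine Finset.sum_induction _ _ (fun a b ha hb => ha.addRep hb) Rep.zero ?_
        intro i hi
        exact Rep.monomial (hco i) (by simpa using Nat.lt_succ_iff.mp (Finset.mem_range.mp hi))
      have hsum : f = ∑ i ∈ Finset.range (f.natDegree + 1), C (f.coeff i) * X ^ i := by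
        conv_lhs => rw [f.as_sum_range' (f.natDegree + 1) (Nat.lt_succ_self _)]
        exact Finset.sum_congr rfl fun i _ => (C_mul_X_pow_eq_monomial).symm
      rwa [← hsum] at hrep
    · -- subtract the minimum value
      have hdeg1 : 1 ≤ f.natDegree := by
        by_contra hcon
        exact hV (Vp_of_natDegree_zero (by omega))
      have hdegpos : 0 < f.degree := natDegree_pos_iff_degree_pos.mp hdeg1
      have hlc : 0 ≤ f.leadingCoeff := by
        by_contra hcon
        push_neg at hcon
        have ht := Polynomial.tendsto_atBot_of_leadingCoeff_nonpos f hdegpos hcon.le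
        obtain ⟨x, hx1, hx2⟩ := ((ht.eventually (eventually_lt_atBot (0:ℝ))).and
          (eventually_ge_atTop (0:ℝ))).exists
        exact absurd (hfpos x hx2) (by linarith)
      have ht := Polynomial.tendsto_atTop_of_leadingCoeff_nonneg f hdegpos hlc
      obtain ⟨M, hM⟩ := (ht.eventually (eventually_ge_atTop (f.eval 0))).exists_forall_of_atTop
      set M' := max M 0 with hM'
      obtain ⟨β, hβmem, hβmin⟩ := isCompact_Icc.exists_isMinOn
        (⟨0, Set.mem_Icc.mpr ⟨le_rfl, le_max_right M 0⟩⟩ : (Set.Icc (0:ℝ) M').Nonempty)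
        f.continuous.continuousOn
      have hβ0 : 0 ≤ β := (Set.mem_Icc.mp hβmem).1
      have hmin : ∀ x : ℝ, 0 ≤ x → f.eval β ≤ f.eval x := by
        intro x hx
        rcases le_or_gt x M' with h | h
        · exact hβmin (Set.mem_Icc.mpr ⟨hx, h⟩)
        · have h1 : M ≤ x := le_trans (le_max_left M 0) h.le
          have h2 : f.eval 0 ≤ f.eval x := hM x h1
          have h3 : f.eval β ≤ f.eval 0 :=
            hβmin (Set.mem_Icc.mpr ⟨le_rfl, le_max_right M 0⟩)
          linarith
      set c := f.eval β with hcdef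
      have hc : 0 < c := hfpos β hβ0
      set g := f - C c with hgdef
      have hgpos : ∀ x : ℝ, 0 ≤ x → 0 ≤ g.eval x := by
        intro x hx
        rw [hgdef, eval_sub, eval_C, sub_nonneg]
        exact hmin x hx
      have hgroot : ∃ x : ℝ, 0 ≤ x ∧ g.eval x = 0 :=
        ⟨β, hβ0, by rw [hgdef, eval_sub, eval_C, sub_self]⟩
      have hdegg : g.natDegree = f.natDegree := natDegree_sub_C
      have hmug : mu g < n := by
        have : mu g = 2 * g.natDegree := by rw [mu, if_pos hgroot, add_zero]
        have hmf : mu f = 2 * f.natDegree + 1 := by rw [mu, if_neg hroot]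
        omega
      have hrec := IH _ hmug g le_rfl hgpos
      have hVg : Vp g ≤ Vp f := by
        refine Vp_sub_C ?_ ?_
        · rw [coeff_zero_eq_eval_zero]; exact hfpos 0 le_rfl
        · have h1 : 0 ≤ g.eval 0 := hgpos 0 le_rfl
          rw [hgdef, eval_sub, eval_C] at h1
          rw [coeff_zero_eq_eval_zero]
          linarith
      have hrep := (hrec.mono (le_of_eq hdegg) hVg).addRep
        ((Rep.const hc.le : Rep f.natDegree (Vp f) (C c)))
      have hfin : g + C c = f := by rw [hgdef]; ring
      rwa [hfin] at hrep
      
/-! ### Pairing with linear functionals -/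

section Pairing

variable {k d : ℕ}

noncomputable def L (v : Fin (d+1) → ℝ) (f : ℝ[X]) : ℝ :=
  ∑ i : Fin (d+1), v i * f.coeff (i : ℕ)

lemma L_add (v : Fin (d+1) → ℝ) (f g : ℝ[X]) : L v (f + g) = L v f + L v g := by
  simp [L, coeff_add, mul_add, Finset.sum_add_distrib]

lemma L_monomial (v : Fin (d+1) → ℝ) (a : ℝ) {e : ℕ} (he : e < d + 1) :
    L v (C a * X ^ e) = v ⟨e, he⟩ * a := by
  rw [L, Finset.sum_eq_single (⟨e, he⟩ : Fin (d+1))]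
  · simp [coeff_C_mul, coeff_X_pow]
  · intro b _ hb
    have hbe : (b : ℕ) ≠ e := fun h => hb (Fin.ext h)
    simp [coeff_C_mul, coeff_X_pow, hbe]
  · intro h; exact absurd (Finset.mem_univ _) h

lemma L_pair_sq (v : Fin (d+1) → ℝ) {s : ℕ} (hs : s + 2*k ≤ d) (x : Fin (k+1) → ℝ) :
    L v (X ^ s * (∑ j : Fin (k+1), C (x j) * X ^ (j:ℕ)) ^ 2)
      = ∑ i : Fin (k+1), ∑ j : Fin (k+1), x i * x j *
          v ⟨s + (i:ℕ) + (j:ℕ), by have := i.isLt; have := j.isLt; omega⟩ := by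
  have hq : X ^ s * (∑ j : Fin (k+1), C (x j) * X ^ (j:ℕ)) ^ 2
      = ∑ i : Fin (k+1), ∑ j : Fin (k+1), C (x i * x j) * X ^ (s + (i:ℕ) + (j:ℕ)) := by
    rw [sq, Finset.sum_mul_sum, Finset.mul_sum]
    refine Finset.sum_congr rfl fun i _ => ?_
    rw [Finset.mul_sum]
    refine Finset.sum_congr rfl fun j _ => ?_
    rw [C_mul]
    rw [pow_add, pow_add]
    ring
  rw [hq, L]
  simp only [finset_sum_coeff, Finset.mul_sum]
  rw [Finset.sum_comm]
  refine Finset.sum_congr rfl fun i _ => ?_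
  rw [Finset.sum_comm]
  refine Finset.sum_congr rfl fun j _ => ?_
  have hlt : s + (i:ℕ) + (j:ℕ) < d + 1 := by have := i.isLt; have := j.isLt; omega
  have := L_monomial v (x i * x j) hlt
  rw [L] at this
  rw [this]
  ring

lemma card_support_X_pow_mul (s : ℕ) (p : ℝ[X]) :
    ((X:ℝ[X]) ^ s * p).support.card ≤ p.support.card := by
  have key : ∀ n ∈ ((X:ℝ[X]) ^ s * p).support, s ≤ n ∧ p.coeff (n - s) ≠ 0 := by
    intro n hn
    rw [mem_support_iff, X_pow_mul, coeff_mul_X_pow'] at hn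
    by_cases h : s ≤ n
    · exact ⟨h, by rwa [if_pos h] at hn⟩
    · rw [if_neg h] at hn; exact absurd rfl hn
  apply Finset.card_le_card_of_injOn (fun n => n - s)
  · intro n hn
    rw [Finset.mem_coe, mem_support_iff]
    exact (key n hn).2
  · intro a ha b hb hab
    have h1 := (key a ha).1
    have h2 := (key b hb).1
    simp only at hab
    omega

lemma mem_SOCF_piece (q : ℝ[X]) {c : ℕ} (hc : c + 2 * q.natDegree ≤ d) (hq : q.natDegree ≤ k) :
    X ^ c * q ^ 2 ∈ SOCF k d := by
  refine ⟨1, fun _ => X ^ c * q ^ 2, fun i => ⟨?_, ?_, ?_⟩, by rw [Fin.sum_univ_one]⟩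
  · calc ((X:ℝ[X]) ^ c * q ^ 2).support.card ≤ (q ^ 2).support.card :=
        card_support_X_pow_mul c (q ^ 2)
      _ ≤ (Finset.range (2*k+1)).card := by
          refine Finset.card_le_card (supp_subset_range ?_)
          have := natDegree_pow_le (p := q) (n := 2)
          omega
      _ = 2 * k + 1 := Finset.card_range _
  · refine le_trans natDegree_mul_le ?_
    rw [natDegree_X_pow]
    have := natDegree_pow_le (p := q) (n := 2)
    omega
  · intro y hy
    rw [eval_mul, eval_pow, eval_pow, eval_X]
    positivity

lemma self_eq_sum_fin {q : ℝ[X]} (hq : q.natDegree ≤ k) :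
    q = ∑ j : Fin (k+1), C (q.coeff (j:ℕ)) * X ^ (j:ℕ) := by
  conv_lhs => rw [q.as_sum_range' (k+1) (by omega)]
  rw [← Fin.sum_univ_eq_sum_range]
  exact Finset.sum_congr rfl fun j _ => (C_mul_X_pow_eq_monomial).symm

lemma padding {c nq : ℕ} (hd2 : 2*k < d) (hc : c + 2*nq ≤ d) (hq : nq ≤ k) :
    ∃ s u : ℕ, c = s + 2*u ∧ s + 2*k ≤ d ∧ u + nq ≤ k := by
  by_cases h : c + 2*k ≤ d
  · exact ⟨c, 0, by omega, by omega, by omega⟩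
  · rcases Nat.even_or_odd (c - (d - 2*k)) with ⟨u, hu⟩ | ⟨u, hu⟩
    · exact ⟨d - 2*k, u, by omega, by omega, by omega⟩
    · exact ⟨d - 2*k - 1, u + 1, by omega, by omega, by omega⟩

lemma dot_mulVec_eq {m : ℕ} (g : Fin m → Fin m → ℝ) (x : Fin m → ℝ) :
    dotProduct x ((Matrix.of g).mulVec x) = ∑ i, ∑ j, x i * x j * g i j := by
  simp only [dotProduct, Matrix.mulVec, Matrix.of_apply, Finset.mul_sum]
  refine Finset.sum_congr rfl fun i _ => Finset.sum_congr rfl fun j _ => ?_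
  ring

lemma L_nonneg_of_Rep (hd2 : 2*k < d) (v : Fin (d+1) → ℝ)
    (hM : ∀ (s : ℕ) (hs : s + 2*k ≤ d) (x : Fin (k+1) → ℝ),
      0 ≤ ∑ i : Fin (k+1), ∑ j : Fin (k+1), x i * x j *
        v ⟨s + (i:ℕ) + (j:ℕ), by have := i.isLt; have := j.isLt; omega⟩)
    {f : ℝ[X]} (hf : Rep d (2*k) f) : 0 ≤ L v f := by
  induction hf with
  | zero => simp [L]
  | add c q f' hc hq _ ih =>
    rw [L_add]
    have hq' : q.natDegree ≤ k := by omega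
    obtain ⟨s, u, hcsu, hsk, huq⟩ := padding hd2 hc hq'
    have hr : ((X:ℝ[X]) ^ u * q).natDegree ≤ k := by
      refine le_trans natDegree_mul_le ?_
      rw [natDegree_X_pow]
      omega
    have hrw : (X:ℝ[X]) ^ c * q ^ 2 = X ^ s * ((X:ℝ[X]) ^ u * q) ^ 2 := by
      rw [hcsu, pow_add]
      ring
    have hpos : 0 ≤ L v ((X:ℝ[X]) ^ c * q ^ 2) := by
      rw [hrw, self_eq_sum_fin hr, L_pair_sq v hsk]
      exact hM s hsk _
    linarith

end Pairing

end Stmt15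

/-- Identifying functionals on `ℝ[t]_d` with vectors `v ∈ ℝ^{d+1}` via `v_i = v(t^i)`,
the dual cone of `SOCF_{2k+1,d}` is the set of `v` whose Hankel matrices
`M_{s,k}(v) = (v_{s+i+j})` are positive semidefinite for `s = 0, …, d - 2k`. -/
theorem stmt_15 (k d : ℕ) (hk : 1 ≤ k) (hd : 2 * k < d) :
    {v : Fin (d + 1) → ℝ | ∀ f ∈ SOCF k d,
        0 ≤ ∑ i : Fin (d + 1), v i * f.coeff (i : ℕ)} =
      {v : Fin (d + 1) → ℝ | ∀ (s : ℕ) (hs : s ≤ d - 2 * k),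
        (Matrix.of fun i j : Fin (k + 1) =>
          v ⟨s + (i : ℕ) + (j : ℕ), by
            have hi := i.isLt; have hj := j.isLt; omega⟩).PosSemidef} := by
  ext v
  simp only [Set.mem_setOf_eq]
  constructor
  · intro hv s hs
    refine Matrix.posSemidef_iff_dotProduct_mulVec.2 ⟨?_, ?_⟩
    · -- Hermitian
      ext i j
      simp only [Matrix.conjTranspose_apply, Matrix.of_apply, star_trivial]
      exact congrArg v (Fin.ext (by simp only [Fin.val_mk]; omega))
    · intro x
      rw [star_trivial, Stmt15.dot_mulVec_eq]
      have hqdeg : (∑ j : Fin (k+1), C (x j) * X ^ (j:ℕ)).natDegree ≤ k := by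
        rw [natDegree_le_iff_coeff_eq_zero]
        intro N hN
        rw [finset_sum_coeff]
        refine Finset.sum_eq_zero fun j _ => ?_
        rw [coeff_C_mul, coeff_X_pow, if_neg (by have := j.isLt; omega), mul_zero]
      have hmem := Stmt15.mem_SOCF_piece (d := d) (k := k)
        (∑ j : Fin (k+1), C (x j) * X ^ (j:ℕ)) (c := s) (by omega) hqdeg
      have h0 := hv _ hmem
      have hL := Stmt15.L_pair_sq (k := k) v (s := s) (by omega) x
      rw [← hL]
      exact h0
  · intro hM f hf
    obtain ⟨m, g, hg, rfl⟩ := hf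
    have hsum : ∑ i : Fin (d+1), v i * (∑ t, g t).coeff (i:ℕ) = ∑ t, Stmt15.L v (g t) := by
      simp only [finset_sum_coeff, Finset.mul_sum, Stmt15.L]
      rw [Finset.sum_comm]
    rw [hsum]
    refine Finset.sum_nonneg fun t _ => ?_
    have hrep : Stmt15.Rep d (2*k) (g t) := by
      have h1 := Stmt15.main_structure (Stmt15.mu (g t)) (g t) le_rfl (hg t).2.2
      exact h1.mono (hg t).2.1 (Stmt15.Vp_le_of_card (hg t).1)
    refine Stmt15.L_nonneg_of_Rep hd v ?_ hrep
    intro s hs x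
    have hs' : s ≤ d - 2*k := by omega
    have h2 := (Matrix.posSemidef_iff_dotProduct_mulVec.1 (hM s hs')).2 x
    rw [star_trivial, Stmt15.dot_mulVec_eq] at h2
    exact h2
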